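/- If z ∈ 𝕂^{n+m} is of leaf type, then there exists t ∈ 𝕂^{n+m} with all coordinates nonzero such that the componentwise product t·z lies in X̄. -/

import Mathlib

open MvPolynomial

noncomputable section

/-- Index type for the variables `T i j` (`Sum.inl ⟨i, j⟩`) and `S k` (`Sum.inr k`). -/
abbrev VarIdx (r m : ℕ) (nn : Fin (r + 1) → ℕ) : Type :=
  (Σ i : Fin (r + 1), Fin (nn i)) ⊕ Fin m

variable (𝕂 : Type) [Field 𝕂]

/-- The monomial `T_i^{l_i} = ∏_j T_{ij}^{l_{ij}}`. -/
def Tmon (r m : ℕ) (nn : Fin (r + 1) → ℕ)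
    (l : ∀ i : Fin (r + 1), Fin (nn i) → ℕ) (i : Fin (r + 1)) :
    MvPolynomial (VarIdx r m nn) 𝕂 :=
  ∏ j : Fin (nn i), (X (Sum.inl ⟨i, j⟩) : MvPolynomial (VarIdx r m nn) 𝕂) ^ l i j

/-- The map sending a column index of the `(c+2)×(c+2)` matrix defining `g_t`
to the corresponding column index of `A`, namely `0, …, c, c + (t+1)`. -/
def colOf (r c : ℕ) (hcr : c ≤ r) (t : Fin (r - c)) (p : Fin (c + 2)) : Fin (r + 1) :=
  if h : (p : ℕ) ≤ c then ⟨p, by omega⟩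
  else ⟨c + 1 + t, by have := t.isLt; omega⟩

/-- The polynomial `g_t`: the determinant of the `(c+2)×(c+2)` matrix whose first
`c+1` rows are formed by the columns `a_0, …, a_c, a_{c+t}` of `A` (as constant
polynomials) and whose last row is `(T_0^{l_0}, …, T_c^{l_c}, T_{c+t}^{l_{c+t}})`. -/
def gPoly (r c m : ℕ) (hcr : c ≤ r) (nn : Fin (r + 1) → ℕ)
    (l : ∀ i : Fin (r + 1), Fin (nn i) → ℕ)
    (A : Matrix (Fin (c + 1)) (Fin (r + 1)) 𝕂) (t : Fin (r - c)) :
    MvPolynomial (VarIdx r m nn) 𝕂 :=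
  Matrix.det (Matrix.of fun q p : Fin (c + 2) =>
    if h : (q : ℕ) < c + 1 then C (A ⟨q, h⟩ (colOf r c hcr t p))
    else Tmon 𝕂 r m nn l (colOf r c hcr t p))

/-- The ring `R = 𝕂[T_{ij}, S_k] / ⟨g_1, …, g_{r-c}⟩`. -/
abbrev RingAP (r c m : ℕ) (hcr : c ≤ r) (nn : Fin (r + 1) → ℕ)
    (l : ∀ i : Fin (r + 1), Fin (nn i) → ℕ)
    (A : Matrix (Fin (c + 1)) (Fin (r + 1)) 𝕂) : Type :=
  MvPolynomial (VarIdx r m nn) 𝕂 ⧸ Ideal.span (Set.range (gPoly 𝕂 r c m hcr nn l A))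

end

noncomputable section
variable (𝕂 : Type) [Field 𝕂]

/-- A point `z ∈ 𝕂^{n+m}` is of big type if for every `i = 0,…,r` some
coordinate `z_{ij}` vanishes. -/
def BigType (r m : ℕ) (nn : Fin (r + 1) → ℕ) (z : VarIdx r m nn → 𝕂) : Prop :=
  ∀ i : Fin (r + 1), ∃ j : Fin (nn i), z (Sum.inl ⟨i, j⟩) = 0

/-- A point `z ∈ 𝕂^{n+m}` is of leaf type if there is a set `I ⊆ {0,…,r}` with at most
`c` elements such that `z_{ij} = 0` implies `i ∈ I`. -/
def LeafType (r c m : ℕ) (nn : Fin (r + 1) → ℕ) (z : VarIdx r m nn → 𝕂) : Prop :=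
  ∃ I : Finset (Fin (r + 1)), I.card ≤ c ∧
    ∀ (i : Fin (r + 1)) (j : Fin (nn i)), z (Sum.inl ⟨i, j⟩) = 0 → i ∈ I

/-- The Jacobian matrix of `g_1, …, g_{r-c}` evaluated at the point `z`. -/
def Jac (r c m : ℕ) (hcr : c ≤ r) (nn : Fin (r + 1) → ℕ)
    (l : ∀ i : Fin (r + 1), Fin (nn i) → ℕ)
    (A : Matrix (Fin (c + 1)) (Fin (r + 1)) 𝕂) (z : VarIdx r m nn → 𝕂) :
    Matrix (Fin (r - c)) (VarIdx r m nn) 𝕂 :=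
  Matrix.of fun t v =>
    MvPolynomial.eval z (MvPolynomial.pderiv v (gPoly 𝕂 r c m hcr nn l A t))

end

/-- Over an infinite field, finitely many nonzero linear functionals on a module have a
common non-vanishing point. -/
lemma aux_avoid {K M J : Type*} [Field K] [Infinite K] [AddCommGroup M] [Module K M]
    (s : Finset J) (g : J → M →ₗ[K] K) (hg : ∀ j ∈ s, g j ≠ 0) :
    ∃ x : M, ∀ j ∈ s, g j x ≠ 0 := by
  classical
  induction s using Finset.cons_induction with
  | empty => exact ⟨0, by simp⟩
  | cons j0 s hj0 ih =>
    obtain ⟨x, hx⟩ := ih fun j hj => hg j (Finset.mem_cons_of_mem hj)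
    have h0 : g j0 ≠ 0 := hg j0 (Finset.mem_cons_self _ _)
    obtain ⟨w, hw⟩ : ∃ w, g j0 w ≠ 0 := by
      by_contra h
      push_neg at h
      exact h0 (LinearMap.ext fun w => by simp [h w])
    obtain ⟨cc, hcc⟩ := Infinite.exists_notMem_finset
      ((Finset.cons j0 s hj0).image fun j => -(g j x) / (g j w))
    refine ⟨x + cc • w, fun j hj hzero => ?_⟩
    rw [map_add, map_smul, smul_eq_mul] at hzero
    rcases eq_or_ne (g j w) 0 with hgw | hgw
    · rcases Finset.mem_cons.mp hj with rfl | hj'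
      · exact hw hgw
      · rw [hgw, mul_zero, add_zero] at hzero
        exact hx j hj' hzero
    · apply hcc
      have hcval : cc = -(g j x) / (g j w) := by
        rw [eq_div_iff hgw]
        exact eq_neg_of_add_eq_zero_right hzero
      exact Finset.mem_image.mpr ⟨j, hj, hcval.symm⟩

/-- If `z ∈ 𝕂^{n+m}` is of leaf type, then there is a point `t` with
all coordinates nonzero such that the componentwise product `t·z` lies in `X̄`. -/
theorem statement_13
    (𝕂 : Type) [Field 𝕂] [IsAlgClosed 𝕂] [CharZero 𝕂]
    (r c m : ℕ) (hc : 0 < c) (hcr : c ≤ r)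
    (nn : Fin (r + 1) → ℕ) (hnn : ∀ i, 0 < nn i)
    (l : ∀ i : Fin (r + 1), Fin (nn i) → ℕ) (hl : ∀ i j, 0 < l i j)
    (A : Matrix (Fin (c + 1)) (Fin (r + 1)) 𝕂)
    (hA : ∀ s : Finset (Fin (r + 1)), s.card = c + 1 →
      LinearIndependent 𝕂 fun j : s => A.transpose (j : Fin (r + 1)))
    (z : VarIdx r m nn → 𝕂) (hz : LeafType 𝕂 r c m nn z) :
    ∃ t : VarIdx r m nn → 𝕂, (∀ v, t v ≠ 0) ∧
      ∀ t' : Fin (r - c),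
        MvPolynomial.eval (fun v => t v * z v) (gPoly 𝕂 r c m hcr nn l A t') = 0 := by
  classical
  obtain ⟨I, hIcard, hI⟩ := hz
  set Z : Finset (Fin (r + 1)) :=
    Finset.univ.filter (fun i => ∃ j, z (Sum.inl ⟨i, j⟩) = 0) with hZdef
  have hZmem : ∀ i, i ∈ Z ↔ ∃ j, z (Sum.inl ⟨i, j⟩) = 0 := by
    intro i; simp [hZdef]
  have hZcard : Z.card ≤ c := by
    refine le_trans (Finset.card_le_card fun i hi => ?_) hIcard
    obtain ⟨j, hj⟩ := (hZmem i).1 hi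
    exact hI i j hj
  -- linear functionals y ↦ (y ᵥ* A) i
  set φ : Fin (r + 1) → ((Fin (c + 1) → 𝕂) →ₗ[𝕂] 𝕂) :=
    fun i => (LinearMap.proj i).comp A.vecMulLinear with hφdef
  have hφ : ∀ i y, φ i y = ∑ q, y q * A q i := by
    intro i y
    simp [hφdef, Matrix.vecMul, dotProduct]
  set K : Submodule 𝕂 (Fin (c + 1) → 𝕂) := ⨅ i ∈ Z, LinearMap.ker (φ i) with hKdef
  have hmemK : ∀ y, y ∈ K ↔ ∀ i ∈ Z, φ i y = 0 := by
    intro y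
    simp [hKdef, Submodule.mem_iInf]
  -- For every i ∉ Z there is y ∈ K with φ i y ≠ 0
  have hwit : ∀ i ∉ Z, ∃ y ∈ K, φ i y ≠ 0 := by
    intro i hiZ
    have hcard : (insert i Z).card ≤ c + 1 :=
      le_trans (Finset.card_insert_le _ _) (by omega)
    obtain ⟨S, hSsub, hScard⟩ := Finset.exists_superset_card_eq hcard
      (by simpa using by omega)
    have e : Fin (c + 1) ≃ S := (S.equivFinOfCardEq hScard).symm
    set B : Matrix (Fin (c + 1)) (Fin (c + 1)) 𝕂 :=
      Matrix.of fun q p => A q (e p) with hBdef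
    have hB : IsUnit B := by
      rw [← Matrix.linearIndependent_cols_iff_isUnit]
      exact (hA S hScard).comp e e.injective
    have hiS : i ∈ S := hSsub (Finset.mem_insert_self i Z)
    set i' : Fin (c + 1) := e.symm ⟨i, hiS⟩ with hi'def
    obtain ⟨y, hy⟩ := (Matrix.vecMul_surjective_iff_isUnit.2 hB) (Pi.single i' 1)
    have hyA : ∀ p : Fin (c + 1), φ (e p) y = (Pi.single i' (1 : 𝕂) : Fin (c + 1) → 𝕂) p := by
      intro p
      rw [hφ]
      have := congrFun hy p
      simpa [Matrix.vecMul, dotProduct, hBdef] using this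
    refine ⟨y, (hmemK y).2 fun zz hzz => ?_, ?_⟩
    · have hzzS : zz ∈ S := hSsub (Finset.mem_insert_of_mem hzz)
      have hp : zz = ↑(e (e.symm ⟨zz, hzzS⟩)) := by simp
      rw [hp, hyA]
      have hne : e.symm ⟨zz, hzzS⟩ ≠ i' := by
        intro h
        apply hiZ
        have : (⟨zz, hzzS⟩ : S) = ⟨i, hiS⟩ := e.symm.injective h
        have : zz = i := congrArg Subtype.val this
        rwa [← this]
      simp [Pi.single_eq_of_ne hne]
    · have hp : i = ↑(e i') := by simp [hi'def]
      rw [hp, hyA]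
      simp
  -- pick y0 in K avoiding all kernels
  have hgne : ∀ i ∈ Zᶜ, (φ i).comp K.subtype ≠ 0 := by
    intro i hi h
    obtain ⟨y, hyK, hyne⟩ := hwit i (Finset.mem_compl.1 hi)
    exact hyne (by simpa using LinearMap.congr_fun h ⟨y, hyK⟩)
  obtain ⟨x, hx⟩ := aux_avoid Zᶜ _ hgne
  set y0 : Fin (c + 1) → 𝕂 := (x : Fin (c + 1) → 𝕂) with hy0def
  set β : Fin (r + 1) → 𝕂 := fun i => φ i y0 with hβdef
  have hβ0 : ∀ i ∈ Z, β i = 0 := fun i hi => (hmemK y0).1 x.2 i hi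
  have hβne : ∀ i ∉ Z, β i ≠ 0 := fun i hi => hx i (Finset.mem_compl.2 hi)
  -- choose the scaling factors
  have hroot : ∀ i : Fin (r + 1), ∃ ξ : 𝕂, i ∉ Z → ξ ≠ 0 ∧
      ξ ^ (l i ⟨0, hnn i⟩) = β i / ∏ j, z (Sum.inl ⟨i, j⟩) ^ l i j := by
    intro i
    by_cases hi : i ∈ Z
    · exact ⟨1, fun h => absurd hi h⟩
    · have hP : (∏ j, z (Sum.inl ⟨i, j⟩) ^ l i j) ≠ 0 := by
        refine Finset.prod_ne_zero_iff.2 fun j _ => pow_ne_zero _ fun h => ?_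
        exact hi ((hZmem i).2 ⟨j, h⟩)
      obtain ⟨ξ, hξ⟩ := IsAlgClosed.exists_pow_nat_eq
        (β i / ∏ j, z (Sum.inl ⟨i, j⟩) ^ l i j) (hl i ⟨0, hnn i⟩)
      refine ⟨ξ, fun _ => ⟨fun h => ?_, hξ⟩⟩
      rw [h, zero_pow (hl i ⟨0, hnn i⟩).ne'] at hξ
      exact (div_ne_zero (hβne i hi) hP) hξ.symm
  choose ξ hξ using hroot
  set t : VarIdx r m nn → 𝕂 := fun v =>
    match v with
    | Sum.inl ⟨i, j⟩ => if i ∈ Z then 1 else if j = ⟨0, hnn i⟩ then ξ i else 1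
    | Sum.inr _ => 1 with htdef
  have htne : ∀ v, t v ≠ 0 := by
    rintro (⟨i, j⟩ | k)
    · by_cases hi : i ∈ Z
      · simp [htdef, hi]
      · by_cases hj : j = ⟨0, hnn i⟩
        · simpa [htdef, hi, hj] using (hξ i hi).1
        · simp [htdef, hi, hj]
    · simp [htdef]
  -- the key computation
  have hkey : ∀ i : Fin (r + 1),
      (∏ j, (t (Sum.inl ⟨i, j⟩) * z (Sum.inl ⟨i, j⟩)) ^ l i j) = β i := by
    intro i
    by_cases hi : i ∈ Z
    · obtain ⟨j, hj⟩ := (hZmem i).1 hi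
      rw [hβ0 i hi]
      exact Finset.prod_eq_zero (Finset.mem_univ j)
        (by rw [hj, mul_zero, zero_pow (hl i j).ne'])
    · have hP : (∏ j, z (Sum.inl ⟨i, j⟩) ^ l i j) ≠ 0 := by
        refine Finset.prod_ne_zero_iff.2 fun j _ => pow_ne_zero _ fun h => ?_
        exact hi ((hZmem i).2 ⟨j, h⟩)
      have h1 : (∏ j, (t (Sum.inl ⟨i, j⟩) * z (Sum.inl ⟨i, j⟩)) ^ l i j)
          = (∏ j, t (Sum.inl ⟨i, j⟩) ^ l i j) * ∏ j, z (Sum.inl ⟨i, j⟩) ^ l i j := by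
        rw [← Finset.prod_mul_distrib]
        exact Finset.prod_congr rfl fun j _ => mul_pow _ _ _
      have h2 : (∏ j, t (Sum.inl ⟨i, j⟩) ^ l i j) = ξ i ^ l i ⟨0, hnn i⟩ := by
        refine Finset.prod_eq_single ⟨0, hnn i⟩ (fun j _ hjne => ?_) (fun h => absurd (Finset.mem_univ _) h) |>.trans ?_
        · simp [htdef, hi, hjne]
        · simp [htdef, hi]
      rw [h1, h2, (hξ i hi).2, div_mul_cancel₀ _ hP]
  have heval : ∀ i : Fin (r + 1),
      MvPolynomial.eval (fun v => t v * z v) (Tmon 𝕂 r m nn l i) = β i := by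
    intro i
    rw [Tmon, map_prod]
    simpa using hkey i
  refine ⟨t, htne, fun t' => ?_⟩
  rw [gPoly, RingHom.map_det]
  rw [← Matrix.exists_vecMul_eq_zero_iff]
  refine ⟨fun q : Fin (c + 2) => if h : (q : ℕ) < c + 1 then y0 ⟨q, h⟩ else -1, ?_, ?_⟩
  · intro h
    have := congrFun h (Fin.last (c + 1))
    simp [Fin.last] at this
  · funext p
    have hsum : ∀ q : Fin (c + 2),
        (if h : (q : ℕ) < c + 1 then y0 ⟨q, h⟩ else -1) *
          ((Matrix.of fun q p : Fin (c + 2) =>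
            if h : (q : ℕ) < c + 1 then C (A ⟨q, h⟩ (colOf r c hcr t' p))
            else Tmon 𝕂 r m nn l (colOf r c hcr t' p)).map
              (MvPolynomial.eval fun v => t v * z v)) q p =
          (if h : (q : ℕ) < c + 1 then y0 ⟨q, h⟩ * A ⟨q, h⟩ (colOf r c hcr t' p)
            else -β (colOf r c hcr t' p)) := by
      intro q
      by_cases h : (q : ℕ) < c + 1
      · simp [Matrix.map_apply, h, show (q : ℕ) ≤ c by omega]
      · simp [Matrix.map_apply, h, show ¬ (q : ℕ) ≤ c by omega, heval]
    simp only [Matrix.vecMul, dotProduct, Pi.zero_apply, RingHom.mapMatrix_apply]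
    rw [Finset.sum_congr rfl fun q _ => hsum q]
    · rw [Fin.sum_univ_castSucc]
      have hlast : ¬ ((Fin.last (c + 1) : ℕ) < c + 1) := by simp [Fin.last]
      rw [dif_neg hlast]
      have hcs : ∀ q : Fin (c + 1),
          (if h : ((q.castSucc : Fin (c + 2)) : ℕ) < c + 1 then
            y0 ⟨(q.castSucc : Fin (c + 2)), h⟩ *
              A ⟨(q.castSucc : Fin (c + 2)), h⟩ (colOf r c hcr t' p)
          else -β (colOf r c hcr t' p)) =
            y0 q * A q (colOf r c hcr t' p) := by
        intro q
        rw [dif_pos (by simpa using q.isLt)]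
        congr 1 <;> · congr 1; exact Fin.ext (by simp)
      rw [Finset.sum_congr rfl fun q _ => hcs q]
      have hφβ : (∑ q : Fin (c + 1), y0 q * A q (colOf r c hcr t' p)) =
          β (colOf r c hcr t' p) := (hφ _ _).symm
      rw [hφβ]
      ring
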